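/- For the quadratic momentum map J_Z(v,w) = Σⱼ Γⱼ(|vⱼ|² + |wⱼ|²) restricted to the subspace {(v,w) ∈ ℂ³ × ℂ³ : Σⱼ Γⱼ vⱼ = 0 and Σⱼ Γⱼ wⱼ = 0}, the form J_Z is definite if and only if Γ₁Γ₂Γ₃(Γ₁+Γ₂+Γ₃) > 0; when definite, J_Z⁻¹(0) = {0}. -/

import Mathlib

open Complex

private lemma csq_key (G0 G1 G2 : ℝ) (v : Fin 3 → ℂ)
    (h : (G0:ℂ) * v 0 + G1 * v 1 + G2 * v 2 = 0) :
    G0*(G0+G2)*G2 * (G0 * normSq (v 0) + G1 * normSq (v 1) + G2 * normSq (v 2))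
      = normSq (((G0*(G0+G2) : ℝ):ℂ) * v 0 + ((G0*G1 : ℝ):ℂ) * v 1)
        + (G0*G1*G2*(G0+G1+G2)) * normSq (v 1) := by
  have hre : G0 * (v 0).re + G1 * (v 1).re + G2 * (v 2).re = 0 := by
    simpa using congrArg Complex.re h
  have him : G0 * (v 0).im + G1 * (v 1).im + G2 * (v 2).im = 0 := by
    simpa using congrArg Complex.im h
  simp only [Complex.normSq_apply, Complex.add_re, Complex.add_im, Complex.mul_re,
    Complex.mul_im, Complex.ofReal_re, Complex.ofReal_im]
  linear_combination (G0*(G0+G2)*(G2*(v 2).re - G0*(v 0).re - G1*(v 1).re)) * hre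
    + (G0*(G0+G2)*(G2*(v 2).im - G0*(v 0).im - G1*(v 1).im)) * him

private lemma key_nonneg (G0 G1 G2 : ℝ) (hδ : 0 < G0*G1*G2*(G0+G1+G2)) (v : Fin 3 → ℂ)
    (h : (G0:ℂ) * v 0 + G1 * v 1 + G2 * v 2 = 0) :
    0 ≤ G0*(G0+G2)*G2 * (G0 * normSq (v 0) + G1 * normSq (v 1) + G2 * normSq (v 2)) := by
  rw [csq_key G0 G1 G2 v h]
  have h1 := Complex.normSq_nonneg (((G0*(G0+G2) : ℝ):ℂ) * v 0 + ((G0*G1 : ℝ):ℂ) * v 1)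
  have h2 := Complex.normSq_nonneg (v 1)
  nlinarith

private lemma key_zero (G0 G1 G2 : ℝ) (h0 : G0 ≠ 0) (h2 : G2 ≠ 0)
    (hδ : 0 < G0*G1*G2*(G0+G1+G2)) (v : Fin 3 → ℂ)
    (h : (G0:ℂ) * v 0 + G1 * v 1 + G2 * v 2 = 0)
    (hq : G0 * normSq (v 0) + G1 * normSq (v 1) + G2 * normSq (v 2) = 0) :
    v = 0 := by
  have hA : G0 + G2 ≠ 0 := by
    intro hs
    have : G0*G1*G2*(G0+G1+G2) = -(G0*G1)^2 := by
      rw [show G2 = -G0 by linarith]; ring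
    nlinarith [sq_nonneg (G0*G1)]
  have hid := csq_key G0 G1 G2 v h
  rw [hq, mul_zero] at hid
  have h1 := Complex.normSq_nonneg (((G0*(G0+G2) : ℝ):ℂ) * v 0 + ((G0*G1 : ℝ):ℂ) * v 1)
  have h2' := Complex.normSq_nonneg (v 1)
  have hv1 : normSq (v 1) = 0 := by nlinarith
  have hv1' : v 1 = 0 := by simpa [Complex.normSq_eq_zero] using hv1
  have hcombo : normSq (((G0*(G0+G2) : ℝ):ℂ) * v 0 + ((G0*G1 : ℝ):ℂ) * v 1) = 0 := by
    nlinarith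
  rw [hv1', mul_zero, add_zero, Complex.normSq_eq_zero, mul_eq_zero] at hcombo
  have hv0 : v 0 = 0 := by
    rcases hcombo with hc | hc
    · exact absurd (by exact_mod_cast hc) (mul_ne_zero h0 hA)
    · exact hc
  have hv2 : v 2 = 0 := by
    rw [hv0, hv1', mul_zero, mul_zero, add_zero, zero_add, mul_eq_zero] at h
    rcases h with hc | hc
    · exact absurd (by exact_mod_cast hc) h2
    · exact hc
  funext j; fin_cases j <;> simpa

theorem JZ_definite_iff (Γ : Fin 3 → ℝ) (hΓ : ∀ j, Γ j ≠ 0) :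
    (((∀ v w : Fin 3 → ℂ, (∑ j, (Γ j : ℂ) * v j) = 0 → (∑ j, (Γ j : ℂ) * w j) = 0 →
        (v, w) ≠ 0 →
        0 < ∑ j, Γ j * (Complex.normSq (v j) + Complex.normSq (w j))) ∨
      (∀ v w : Fin 3 → ℂ, (∑ j, (Γ j : ℂ) * v j) = 0 → (∑ j, (Γ j : ℂ) * w j) = 0 →
        (v, w) ≠ 0 →
        (∑ j, Γ j * (Complex.normSq (v j) + Complex.normSq (w j))) < 0)) ↔
      0 < Γ 0 * Γ 1 * Γ 2 * (Γ 0 + Γ 1 + Γ 2)) ∧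
    (0 < Γ 0 * Γ 1 * Γ 2 * (Γ 0 + Γ 1 + Γ 2) →
      ∀ v w : Fin 3 → ℂ, (∑ j, (Γ j : ℂ) * v j) = 0 → (∑ j, (Γ j : ℂ) * w j) = 0 →
        (∑ j, Γ j * (Complex.normSq (v j) + Complex.normSq (w j))) = 0 →
        v = 0 ∧ w = 0) := by
  have h0 := hΓ 0
  have h1 := hΓ 1
  have h2 := hΓ 2
  -- abbreviations
  set δ := Γ 0 * Γ 1 * Γ 2 * (Γ 0 + Γ 1 + Γ 2) with hδdef
  have hsum : ∀ v w : Fin 3 → ℂ,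
      (∑ j, Γ j * (Complex.normSq (v j) + Complex.normSq (w j)))
      = (Γ 0 * normSq (v 0) + Γ 1 * normSq (v 1) + Γ 2 * normSq (v 2))
        + (Γ 0 * normSq (w 0) + Γ 1 * normSq (w 1) + Γ 2 * normSq (w 2)) := by
    intro v w; rw [Fin.sum_univ_three]; ring
  have hcsum : ∀ v : Fin 3 → ℂ,
      (∑ j, (Γ j : ℂ) * v j) = (Γ 0 : ℂ) * v 0 + Γ 1 * v 1 + Γ 2 * v 2 := by
    intro v; rw [Fin.sum_univ_three]
  constructor
  · constructor
    · -- definite → δ > 0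
      intro H
      -- same-sign product of q at nonzero constrained vectors
      have key : ∀ v v' : Fin 3 → ℂ,
          ((Γ 0:ℂ) * v 0 + Γ 1 * v 1 + Γ 2 * v 2) = 0 →
          ((Γ 0:ℂ) * v' 0 + Γ 1 * v' 1 + Γ 2 * v' 2) = 0 →
          v ≠ 0 → v' ≠ 0 →
          0 < (Γ 0 * normSq (v 0) + Γ 1 * normSq (v 1) + Γ 2 * normSq (v 2)) *
              (Γ 0 * normSq (v' 0) + Γ 1 * normSq (v' 1) + Γ 2 * normSq (v' 2)) := by
        intro v v' hv hv' hne hne'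
        have hw0 : (∑ j, (Γ j:ℂ) * (fun _ => (0:ℂ)) j) = 0 := by simp
        have hne2 : (v, (fun _ => (0:ℂ) : Fin 3 → ℂ)) ≠ 0 := by
          simp only [ne_eq, Prod.mk_eq_zero, not_and]
          intro hv0; exact absurd hv0 hne
        have hne2' : (v', (fun _ => (0:ℂ) : Fin 3 → ℂ)) ≠ 0 := by
          simp only [ne_eq, Prod.mk_eq_zero, not_and]
          intro hv0; exact absurd hv0 hne'
        rcases H with H | H
        · have a1 := H v _ (by rw [hcsum]; exact hv) hw0 hne2
          have a2 := H v' _ (by rw [hcsum]; exact hv') hw0 hne2'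
          rw [hsum] at a1 a2
          simp only [Complex.normSq_zero, mul_zero, add_zero] at a1 a2
          exact mul_pos a1 a2
        · have a1 := H v _ (by rw [hcsum]; exact hv) hw0 hne2
          have a2 := H v' _ (by rw [hcsum]; exact hv') hw0 hne2'
          rw [hsum] at a1 a2
          simp only [Complex.normSq_zero, mul_zero, add_zero] at a1 a2
          exact mul_pos_of_neg_of_neg a1 a2
      by_cases hA : Γ 0 + Γ 2 = 0
      · -- degenerate case: contradiction
        exfalso
        set t1 : ℝ := (Γ 1 - Γ 0 + 1)/2 with ht1
        set t2 : ℝ := (Γ 1 - Γ 0 - 1)/2 with ht2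
        have mk : ∀ t : ℝ, ∃ u : Fin 3 → ℂ,
            ((Γ 0:ℂ) * u 0 + Γ 1 * u 1 + Γ 2 * u 2) = 0 ∧ u ≠ 0 ∧
            (Γ 0 * normSq (u 0) + Γ 1 * normSq (u 1) + Γ 2 * normSq (u 2))
              = Γ 1 * (Γ 0)^3 * (Γ 0 - Γ 1 + 2*t) := by
          intro t
          refine ⟨![((Γ 2 * t : ℝ):ℂ), ((Γ 2^2 : ℝ):ℂ), ((-(Γ 0 * t + Γ 1 * Γ 2) : ℝ):ℂ)],
            ?_, ?_, ?_⟩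
          · show (Γ 0:ℂ) * ((Γ 2 * t : ℝ):ℂ) + (Γ 1:ℂ) * ((Γ 2^2 : ℝ):ℂ)
              + (Γ 2:ℂ) * ((-(Γ 0 * t + Γ 1 * Γ 2) : ℝ):ℂ) = 0
            push_cast; ring
          · intro hu
            have := congrFun hu 1
            simp only [Matrix.cons_val_one, Matrix.head_cons, Matrix.cons_val_zero, Pi.zero_apply] at this
            have : (Γ 2)^2 = 0 := by exact_mod_cast this
            exact h2 (by nlinarith)
          · show Γ 0 * normSq ((Γ 2 * t : ℝ):ℂ) + Γ 1 * normSq ((Γ 2^2 : ℝ):ℂ)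
              + Γ 2 * normSq ((-(Γ 0 * t + Γ 1 * Γ 2) : ℝ):ℂ) = _
            rw [Complex.normSq_ofReal, Complex.normSq_ofReal, Complex.normSq_ofReal]
            have hG2 : Γ 2 = -Γ 0 := by linarith
            rw [hG2]; ring
        obtain ⟨u1, hu1c, hu1n, hu1q⟩ := mk t1
        obtain ⟨u2, hu2c, hu2n, hu2q⟩ := mk t2
        have hp := key u1 u2 hu1c hu2c hu1n hu2n
        rw [hu1q, hu2q] at hp
        have e1 : Γ 0 - Γ 1 + 2*t1 = 1 := by rw [ht1]; ring
        have e2 : Γ 0 - Γ 1 + 2*t2 = -1 := by rw [ht2]; ring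
        rw [e1, e2] at hp
        nlinarith [sq_nonneg (Γ 1 * Γ 0^3)]
      · -- main case
        set a : ℝ := Γ 0 * (Γ 0 + Γ 2) with ha
        set b : ℝ := Γ 0 * Γ 1 with hb
        have haz : a ≠ 0 := mul_ne_zero h0 hA
        have mkv : ∃ u : Fin 3 → ℂ,
            ((Γ 0:ℂ) * u 0 + Γ 1 * u 1 + Γ 2 * u 2) = 0 ∧ u ≠ 0 ∧
            (Γ 0 * normSq (u 0) + Γ 1 * normSq (u 1) + Γ 2 * normSq (u 2)) = Γ 2 * a := by
          refine ⟨![((Γ 2 : ℝ):ℂ), 0, ((-Γ 0 : ℝ):ℂ)], ?_, ?_, ?_⟩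
          · show (Γ 0:ℂ) * ((Γ 2 : ℝ):ℂ) + (Γ 1:ℂ) * 0 + (Γ 2:ℂ) * ((-Γ 0 : ℝ):ℂ) = 0
            push_cast; ring
          · intro hu
            have := congrFun hu 0
            simp only [Matrix.cons_val_zero, Pi.zero_apply] at this
            exact h2 (by exact_mod_cast this)
          · show Γ 0 * normSq ((Γ 2 : ℝ):ℂ) + Γ 1 * normSq (0:ℂ)
              + Γ 2 * normSq ((-Γ 0 : ℝ):ℂ) = _
            rw [Complex.normSq_ofReal, Complex.normSq_ofReal, Complex.normSq_zero, ha]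
            ring
        have mkv' : ∃ u : Fin 3 → ℂ,
            ((Γ 0:ℂ) * u 0 + Γ 1 * u 1 + Γ 2 * u 2) = 0 ∧ u ≠ 0 ∧
            (Γ 0 * normSq (u 0) + Γ 1 * normSq (u 1) + Γ 2 * normSq (u 2))
              = Γ 2 * a * δ := by
          refine ⟨![((Γ 2 * b : ℝ):ℂ), ((-(Γ 2 * a) : ℝ):ℂ), ((Γ 1 * a - Γ 0 * b : ℝ):ℂ)],
            ?_, ?_, ?_⟩
          · show (Γ 0:ℂ) * ((Γ 2 * b : ℝ):ℂ) + (Γ 1:ℂ) * ((-(Γ 2 * a) : ℝ):ℂ)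
              + (Γ 2:ℂ) * ((Γ 1 * a - Γ 0 * b : ℝ):ℂ) = 0
            push_cast; ring
          · intro hu
            have := congrFun hu 1
            simp only [Matrix.cons_val_one, Matrix.head_cons, Matrix.cons_val_zero, Pi.zero_apply] at this
            have : -(Γ 2 * a) = 0 := by exact_mod_cast this
            exact (mul_ne_zero h2 haz) (by linarith)
          · show Γ 0 * normSq ((Γ 2 * b : ℝ):ℂ) + Γ 1 * normSq ((-(Γ 2 * a) : ℝ):ℂ)
              + Γ 2 * normSq ((Γ 1 * a - Γ 0 * b : ℝ):ℂ) = _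
            rw [Complex.normSq_ofReal, Complex.normSq_ofReal, Complex.normSq_ofReal,
              hδdef, ha, hb]
            ring
        obtain ⟨u1, hu1c, hu1n, hu1q⟩ := mkv
        obtain ⟨u2, hu2c, hu2n, hu2q⟩ := mkv'
        have hp := key u1 u2 hu1c hu2c hu1n hu2n
        rw [hu1q, hu2q] at hp
        by_contra hδn
        push_neg at hδn
        have hsq : 0 < (Γ 2 * a)^2 := by positivity
        nlinarith
    · -- δ > 0 → definite
      intro hδ
      have hc : Γ 0 * (Γ 0 + Γ 2) * Γ 2 ≠ 0 := by
        have hA : Γ 0 + Γ 2 ≠ 0 := by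
          intro hs
          have : Γ 0 * Γ 1 * Γ 2 * (Γ 0 + Γ 1 + Γ 2) = -(Γ 0 * Γ 1)^2 := by
            rw [show Γ 2 = -Γ 0 by linarith]; ring
          nlinarith [sq_nonneg (Γ 0 * Γ 1)]
        exact mul_ne_zero (mul_ne_zero h0 hA) h2
      rcases hc.lt_or_gt with hcneg | hcpos
      · right
        intro v w hv hw hne
        rw [hcsum] at hv hw
        have n1 := key_nonneg (Γ 0) (Γ 1) (Γ 2) hδ v hv
        have n2 := key_nonneg (Γ 0) (Γ 1) (Γ 2) hδ w hw
        rw [hsum]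
        by_contra hle
        push_neg at hle
        have q1 : Γ 0 * normSq (v 0) + Γ 1 * normSq (v 1) + Γ 2 * normSq (v 2) = 0 := by
          nlinarith
        have q2 : Γ 0 * normSq (w 0) + Γ 1 * normSq (w 1) + Γ 2 * normSq (w 2) = 0 := by
          nlinarith
        exact hne (Prod.ext (key_zero _ _ _ h0 h2 hδ v hv q1) (key_zero _ _ _ h0 h2 hδ w hw q2))
      · left
        intro v w hv hw hne
        rw [hcsum] at hv hw
        have n1 := key_nonneg (Γ 0) (Γ 1) (Γ 2) hδ v hv
        have n2 := key_nonneg (Γ 0) (Γ 1) (Γ 2) hδ w hw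
        rw [hsum]
        by_contra hle
        push_neg at hle
        have q1 : Γ 0 * normSq (v 0) + Γ 1 * normSq (v 1) + Γ 2 * normSq (v 2) = 0 := by
          nlinarith
        have q2 : Γ 0 * normSq (w 0) + Γ 1 * normSq (w 1) + Γ 2 * normSq (w 2) = 0 := by
          nlinarith
        exact hne (Prod.ext (key_zero _ _ _ h0 h2 hδ v hv q1) (key_zero _ _ _ h0 h2 hδ w hw q2))
  · -- J⁻¹(0) = {0}
    intro hδ v w hv hw hq
    rw [hcsum] at hv hw
    rw [hsum] at hq
    have n1 := key_nonneg (Γ 0) (Γ 1) (Γ 2) hδ v hv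
    have n2 := key_nonneg (Γ 0) (Γ 1) (Γ 2) hδ w hw
    have hc : Γ 0 * (Γ 0 + Γ 2) * Γ 2 ≠ 0 := by
      have hA : Γ 0 + Γ 2 ≠ 0 := by
        intro hs
        have : Γ 0 * Γ 1 * Γ 2 * (Γ 0 + Γ 1 + Γ 2) = -(Γ 0 * Γ 1)^2 := by
          rw [show Γ 2 = -Γ 0 by linarith]; ring
        nlinarith [sq_nonneg (Γ 0 * Γ 1)]
      exact mul_ne_zero (mul_ne_zero h0 hA) h2
    have q1 : Γ 0 * normSq (v 0) + Γ 1 * normSq (v 1) + Γ 2 * normSq (v 2) = 0 := by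
      rcases hc.lt_or_gt with h | h <;> nlinarith
    have q2 : Γ 0 * normSq (w 0) + Γ 1 * normSq (w 1) + Γ 2 * normSq (w 2) = 0 := by
      rcases hc.lt_or_gt with h | h <;> nlinarith
    exact ⟨key_zero _ _ _ h0 h2 hδ v hv q1, key_zero _ _ _ h0 h2 hδ w hw q2⟩
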